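/- (Sublinear convergence) Under the assumptions: f convex essentially smooth with minimizer x_min, k Legendre convex uniquely minimized at 0, ∇f(int(dom f)) ⊆ int(dom k), and D_k(∇f(y), ∇f(x)) ≤ L*·D_f(x, y) for all x, y ∈ int(dom f); if x₀ ∈ int(dom f), then the iterates x_i = x_{i−1} − (1/L*)∇k(∇f(x_{i−1})) satisfy, for all i > 0, k(∇f(x_i)) − k(0) ≤ (L*/i)·(f(x₀) − f(x_min)). In particular ∇f(x_i) → 0. -/

import Mathlib

open Filter Topology RealInnerProductSpace Classical

noncomputable section

abbrev E (d : ℕ) := EuclideanSpace ℝ (Fin d)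

def IsEssentiallySmooth {d : ℕ} (f : E d → ℝ) (S : Set (E d)) (f' : E d → E d) : Prop :=
  (interior S).Nonempty ∧
  (∀ x ∈ interior S, HasGradientAt f (f' x) x) ∧
  ∀ (u : ℕ → E d) (y : E d), (∀ n, u n ∈ interior S) → y ∈ frontier S →
    Tendsto u atTop (𝓝 y) → Tendsto (fun n => ‖f' (u n)‖) atTop atTop

def IsProperClosedConvexOn {d : ℕ} (f : E d → ℝ) (S : Set (E d)) : Prop :=
  S.Nonempty ∧ ConvexOn ℝ S f ∧
  IsClosed {p : E d × ℝ | p.1 ∈ S ∧ f p.1 ≤ p.2}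

def IsLegendre {d : ℕ} (f : E d → ℝ) (S : Set (E d)) (f' : E d → E d) : Prop :=
  IsProperClosedConvexOn f S ∧ IsEssentiallySmooth f S f' ∧
  StrictConvexOn ℝ (interior S) f

/-- The (classical) Bregman divergence `D_f(x, y) = f(x) - f(y) - ⟪∇f(y), x - y⟫`. -/
def Breg {d : ℕ} (f : E d → ℝ) (f' : E d → E d) (x y : E d) : ℝ :=
  f x - f y - ⟪f' y, x - y⟫

/-- Gradient inequality for convex functions. -/
lemma grad_ineq {d : ℕ} {f : E d → ℝ} {S : Set (E d)} (hf : ConvexOn ℝ S f)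
    {x y gx : E d} (hd : HasGradientAt f gx x)
    (hx : x ∈ S) (hy : y ∈ S) : f x + ⟪gx, y - x⟫ ≤ f y := by
  set v := y - x with hv
  have hline : HasDerivAt (fun t : ℝ => x + t • v) v 0 := by
    simpa using ((hasDerivAt_id (0:ℝ)).smul_const v).const_add x
  have hd' : HasFDerivAt f ((InnerProductSpace.toDual ℝ (E d)) gx) (x + (0:ℝ) • v) := by
    simpa using hd.hasFDerivAt
  have hφ : HasDerivAt (fun t : ℝ => f (x + t • v)) ⟪gx, v⟫ 0 := by
    simpa [Function.comp_def] using hd'.comp_hasDerivAt 0 hline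
  have hslope : Tendsto (slope (fun t : ℝ => f (x + t • v)) 0) (𝓝[>] 0) (𝓝 ⟪gx, v⟫) :=
    (hasDerivAt_iff_tendsto_slope.mp hφ).mono_left
      (nhdsWithin_mono 0 (fun t ht => ne_of_gt ht))
  have hev : ∀ᶠ t in 𝓝[>] (0:ℝ), slope (fun t : ℝ => f (x + t • v)) 0 t ≤ f y - f x := by
    filter_upwards [Ioc_mem_nhdsGT_of_mem (Set.mem_Ico.mpr ⟨le_refl (0:ℝ), zero_lt_one⟩)] with t ht
    have ht0 : (0:ℝ) < t := ht.1
    have hcombo : x + t • v = (1 - t) • x + t • y := by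
      rw [hv]; module
    have hcx : f (x + t • v) ≤ (1 - t) * f x + t * f y := by
      rw [hcombo]
      exact hf.2 hx hy (by linarith [ht.2]) ht0.le (by ring)
    rw [slope_def_field]
    simp only [zero_smul, add_zero, sub_zero]
    rw [div_le_iff₀ ht0]
    nlinarith [hcx]
  have := le_of_tendsto hslope hev
  linarith

/-- Linear growth away from the unique minimum, for a proper closed convex function. -/
lemma growth {d : ℕ} {k : E d → ℝ} {Sk : Set (E d)}
    (hpc : IsProperClosedConvexOn k Sk) (hk0 : (0 : E d) ∈ Sk)
    (hk0min : ∀ y ∈ Sk, y ≠ 0 → k 0 < k y) {s : ℝ} (hs : 0 < s) :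
    ∃ c > 0, ∀ z ∈ Sk, s ≤ ‖z‖ → c * (‖z‖ / s) ≤ k z - k 0 := by
  have hsph : ∃ c > 0, ∀ w ∈ Sk, ‖w‖ = s → c ≤ k w - k 0 := by
    by_contra hcon
    push_neg at hcon
    have hW : ∀ n : ℕ, ∃ w, w ∈ Sk ∧ ‖w‖ = s ∧ k w - k 0 < 1 / (n + 1) := by
      intro n
      obtain ⟨w, hw1, hw2, hw3⟩ := hcon (1 / (n + 1)) (by positivity)
      exact ⟨w, hw1, hw2, hw3⟩
    choose w hw1 hw2 hw3 using hW
    have hwsph : ∀ n, w n ∈ Metric.sphere (0 : E d) s := by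
      intro n; simpa [Metric.mem_sphere, dist_eq_norm] using hw2 n
    obtain ⟨wl, hwl, φ, hφmono, hφtend⟩ :=
      (isCompact_sphere (0 : E d) s).tendsto_subseq hwsph
    have hatend : Tendsto (fun n => k 0 + 1 / ((φ n : ℝ) + 1)) atTop (𝓝 (k 0)) := by
      have : Tendsto (fun n : ℕ => 1 / ((φ n : ℝ) + 1)) atTop (𝓝 0) :=
        (tendsto_one_div_add_atTop_nhds_zero_nat).comp hφmono.tendsto_atTop
      simpa using (tendsto_const_nhds.add this)
    have hmem : (wl, k 0) ∈ {p : E d × ℝ | p.1 ∈ Sk ∧ k p.1 ≤ p.2} := by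
      apply hpc.2.2.mem_of_tendsto (hφtend.prodMk_nhds hatend)
      filter_upwards with n
      refine ⟨hw1 _, le_of_lt ?_⟩
      have := hw3 (φ n)
      simp only [Function.comp_apply]
      linarith
    have hne : wl ≠ 0 := by
      intro h
      rw [h] at hwl
      simp [Metric.mem_sphere] at hwl
      exact absurd hwl.symm (ne_of_gt hs)
    exact absurd hmem.2 (not_le.mpr (hk0min _ hmem.1 hne))
  obtain ⟨c, hc, hcs⟩ := hsph
  refine ⟨c, hc, fun z hz hnz => ?_⟩
  have hz0 : (0:ℝ) < ‖z‖ := lt_of_lt_of_le hs hnz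
  set lam : ℝ := s / ‖z‖ with hlam
  have hlam0 : 0 < lam := by positivity
  have hlam1 : lam ≤ 1 := by
    rw [hlam, div_le_one hz0]; exact hnz
  have hwmem : lam • z ∈ Sk := by
    have hcv := hpc.2.1.1
    have := hcv hz hk0 (a := lam) (b := 1 - lam) hlam0.le (by linarith) (by ring)
    simpa using this
  have hwnorm : ‖lam • z‖ = s := by
    rw [norm_smul, Real.norm_eq_abs, abs_of_pos hlam0, hlam]
    field_simp
  have hkw : k (lam • z) ≤ lam * k z + (1 - lam) * k 0 := by
    have hcv := hpc.2.1.2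
    have := hcv hz hk0 (a := lam) (b := 1 - lam) hlam0.le (by linarith) (by ring)
    simpa using this
  have h1 : c ≤ lam * (k z - k 0) := by
    have := hcs _ hwmem hwnorm
    nlinarith
  have hsc : lam * (‖z‖ / s) = 1 := by
    rw [hlam]; field_simp
  calc c * (‖z‖ / s) ≤ (lam * (k z - k 0)) * (‖z‖ / s) := by
        apply mul_le_mul_of_nonneg_right h1 (by positivity)
    _ = (k z - k 0) * (lam * (‖z‖ / s)) := by ring
    _ = k z - k 0 := by rw [hsc]; ring

/-- The key descent-type bound along a partial step. -/
lemma chain_bound {d : ℕ} {f k : E d → ℝ} {Sf : Set (E d)} {f' k' : E d → E d}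
    (hf : ConvexOn ℝ Sf f) (hfgrad : ∀ x ∈ interior Sf, HasGradientAt f (f' x) x)
    {L : ℝ} (hL : 0 < L)
    (hrel : ∀ x ∈ interior Sf, ∀ y ∈ interior Sf,
      Breg k k' (f' y) (f' x) ≤ L * Breg f f' x y)
    {xb : E d} (hxb : xb ∈ interior Sf)
    {t : ℝ} (ht0 : 0 ≤ t) (ht1 : t ≤ 1)
    (hpt : xb - (t / L) • k' (f' xb) ∈ interior Sf) :
    k (f' (xb - (t / L) • k' (f' xb))) ≤ k (f' xb) := by
  rcases eq_or_lt_of_le ht0 with h | h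
  · subst h; simp
  set g := k' (f' xb) with hgdef
  set q := xb - (t / L) • g with hq
  set z0 := f' xb with hz0
  set zt := f' q with hzt
  have hsub : xb - q = (t / L) • g := by rw [hq]; abel
  have hsub' : q - xb = -((t / L) • g) := by rw [hq]; abel
  have h1 := hrel xb hxb q hpt
  rw [Breg, Breg, ← hz0, ← hzt, hsub] at h1
  have e1 : ⟪zt, (t / L) • g⟫ = (t / L) * ⟪zt, g⟫ := real_inner_smul_right _ _ _
  have e2 : ⟪g, zt - z0⟫ = ⟪g, zt⟫ - ⟪g, z0⟫ := inner_sub_right _ _ _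
  have h2 := grad_ineq hf (hfgrad xb hxb) (interior_subset hxb) (interior_subset hpt)
  rw [← hz0, hsub'] at h2
  have e3 : ⟪z0, -((t / L) • g)⟫ = -((t / L) * ⟪z0, g⟫) := by
    rw [inner_neg_right, real_inner_smul_right]
  have h3 := grad_ineq hf (hfgrad q hpt) (interior_subset hpt) (interior_subset hxb)
  rw [← hzt, hsub] at h3
  rw [e1, e2] at h1
  rw [e3] at h2
  rw [e1] at h3
  have esym : ⟪z0, g⟫ = ⟪g, z0⟫ := real_inner_comm _ _
  have esym2 : ⟪zt, g⟫ = ⟪g, zt⟫ := real_inner_comm _ _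
  rw [esym] at h2
  rw [esym2] at h1 h3
  have htL : 0 < t / L := by positivity
  have h4 : (t / L) * ⟪g, zt⟫ ≤ (t / L) * ⟪g, z0⟫ := by linarith
  have hmono : ⟪g, zt⟫ ≤ ⟪g, z0⟫ := (mul_le_mul_iff_right₀ htL).mp h4
  have he0 : L * ((t / L) * ⟪g, z0⟫) = t * ⟪g, z0⟫ := by field_simp
  have he1 : L * (f xb - f q - (t / L) * ⟪g, zt⟫)
      = L * (f xb - f q) - t * ⟪g, zt⟫ := by field_simp
  have hLfq : L * (f xb - f q) ≤ t * ⟪g, z0⟫ := by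
    have h5 : f xb - f q ≤ (t / L) * ⟪g, z0⟫ := by linarith
    have := mul_le_mul_of_nonneg_left h5 hL.le
    linarith [he0]
  have h1' : k zt - k z0 - (⟪g, zt⟫ - ⟪g, z0⟫) ≤ L * (f xb - f q) - t * ⟪g, zt⟫ := by
    linarith [h1, he1]
  have hexp : (1 - t) * (⟪g, z0⟫ - ⟪g, zt⟫)
      = ⟪g, z0⟫ - ⟪g, zt⟫ - t * ⟪g, z0⟫ + t * ⟪g, zt⟫ := by ring
  have hnn : 0 ≤ (1 - t) * (⟪g, z0⟫ - ⟪g, zt⟫) :=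
    mul_nonneg (by linarith) (by linarith)
  linarith [h1', hLfq, hnn, hexp]

/-- One step of the iteration stays in the interior of the domain of `f`. -/
lemma step_mem {d : ℕ} {f k : E d → ℝ} {Sf Sk : Set (E d)} {f' k' : E d → E d}
    (hfpc : IsProperClosedConvexOn f Sf) (hfes : IsEssentiallySmooth f Sf f')
    (hkpc : IsProperClosedConvexOn k Sk)
    (hk0 : (0 : E d) ∈ Sk) (hk0min : ∀ y ∈ Sk, y ≠ 0 → k 0 < k y)
    {L : ℝ} (hL : 0 < L)
    (hincl : ∀ x ∈ interior Sf, f' x ∈ interior Sk)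
    (hrel : ∀ x ∈ interior Sf, ∀ y ∈ interior Sf,
      Breg k k' (f' y) (f' x) ≤ L * Breg f f' x y)
    {xb : E d} (hxb : xb ∈ interior Sf) :
    xb - (1 / L) • k' (f' xb) ∈ interior Sf := by
  by_contra hnot
  set g := k' (f' xb) with hgdef
  set p : ℝ → E d := fun t => xb - (t / L) • g with hp
  obtain ⟨c, hc, hgrow⟩ := growth hkpc hk0 hk0min (s := 1) one_pos
  -- uniform norm bound on the gradient along the admissible part of the segment
  set B : ℝ := max 1 ((k (f' xb) - k 0) / c) with hB
  have hbound : ∀ t, 0 ≤ t → t ≤ 1 → p t ∈ interior Sf → ‖f' (p t)‖ ≤ B := by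
    intro t ht0 ht1 hpt
    by_cases hn : ‖f' (p t)‖ ≤ 1
    · exact le_trans hn (le_max_left _ _)
    · push_neg at hn
      have hzSk : f' (p t) ∈ Sk := interior_subset (hincl _ hpt)
      have h1 := hgrow _ hzSk hn.le
      have h2 : k (f' (p t)) ≤ k (f' xb) :=
        chain_bound hfpc.2.1 hfes.2.1 hL hrel hxb ht0 ht1 hpt
      have hcn : c * ‖f' (p t)‖ ≤ k (f' xb) - k 0 := by
        have : c * (‖f' (p t)‖ / 1) = c * ‖f' (p t)‖ := by ring
        linarith [h1, this]
      have : ‖f' (p t)‖ ≤ (k (f' xb) - k 0) / c := by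
        rw [le_div_iff₀ hc]; linarith
      exact le_trans this (le_max_right _ _)
  -- the admissible set of times
  set T : Set ℝ := {t : ℝ | 0 ≤ t ∧ t ≤ 1 ∧ p t ∈ interior Sf} with hT
  have hp0 : p 0 = xb := by simp [hp]
  have h0T : (0:ℝ) ∈ T := ⟨le_refl 0, zero_le_one, by rw [hp0]; exact hxb⟩
  have hTne : T.Nonempty := ⟨0, h0T⟩
  have hTbdd : BddAbove T := ⟨1, fun t ht => ht.2.1⟩
  -- star-shapedness
  have hstar : ∀ t ∈ T, ∀ s, 0 ≤ s → s ≤ t → s ∈ T := by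
    intro t ht s hs0 hst
    rcases eq_or_lt_of_le (hs0.trans hst) with h | h
    · refine ⟨hs0, hst.trans ht.2.1, ?_⟩
      rw [← h] at hst
      have hs : s = 0 := le_antisymm hst hs0
      rw [hs, hp0]; exact hxb
    · refine ⟨hs0, hst.trans ht.2.1, ?_⟩
      have hcomb : p s = (1 - s / t) • xb + (s / t) • p t := by
        rw [hp]
        simp only []
        rw [smul_sub, smul_smul]
        have hst' : s / t * (t / L) = s / L := by field_simp
        rw [hst']
        module
      rw [hcomb]
      have hconvint : Convex ℝ (interior Sf) := hfpc.2.1.1.interior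
      have h01 : 0 ≤ s / t := by positivity
      have h02 : s / t ≤ 1 := by rw [div_le_one h]; exact hst
      exact hconvint hxb ht.2.2 (by linarith) h01 (by ring)
  set ts := sSup T with hts
  have hts1 : ts ≤ 1 := csSup_le hTne (fun t ht => ht.2.1)
  have hts0 : 0 ≤ ts := le_csSup hTbdd h0T
  have hpcont : Continuous p := by
    apply Continuous.sub continuous_const
    exact (continuous_id.div_const L).smul continuous_const
  have hAopen : IsOpen {t : ℝ | p t ∈ interior Sf} := isOpen_interior.preimage hpcont
  by_cases hmem : p ts ∈ interior Sf
  · -- sSup attained in interior: either ts = 1 (contradiction) or can push further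
    rcases eq_or_lt_of_le hts1 with h1 | h1
    · apply hnot
      have : p 1 ∈ interior Sf := by rw [← h1]; exact hmem
      simpa [hp] using this
    · obtain ⟨ε, hε, hball⟩ := Metric.isOpen_iff.mp hAopen ts hmem
      set t' := min 1 (ts + ε / 2) with ht'
      have htlt : ts < t' := lt_min h1 (by linarith)
      have ht'T : t' ∈ T := by
        refine ⟨le_trans hts0 htlt.le, min_le_left _ _, ?_⟩
        apply hball
        rw [Metric.mem_ball, Real.dist_eq, abs_of_nonneg (by linarith [htlt.le] : (0:ℝ) ≤ t' - ts)]
        have : t' ≤ ts + ε / 2 := min_le_right _ _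
        linarith
      exact absurd (le_csSup hTbdd ht'T) (not_le.mpr htlt)
  · -- boundary case: blow-up contradiction
    -- ts > 0
    obtain ⟨r, hr, hball⟩ := Metric.isOpen_iff.mp hAopen 0 (by rw [Set.mem_setOf_eq, hp0]; exact hxb)
    have hrT : min (r / 2) 1 ∈ T := by
      refine ⟨by positivity, min_le_right _ _, ?_⟩
      apply hball
      rw [Metric.mem_ball, Real.dist_eq, sub_zero, abs_of_nonneg (by positivity)]
      exact lt_of_le_of_lt (min_le_left _ _) (by linarith)
    have htspos : 0 < ts := lt_of_lt_of_le (by positivity) (le_csSup hTbdd hrT)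
    -- approximating sequence
    set tn : ℕ → ℝ := fun n => ts - ts / (n + 2) with htn
    have htnT : ∀ n, tn n ∈ T := by
      intro n
      have h1 : tn n < ts := by
        rw [htn]; simp only []
        have : 0 < ts / (n + 2) := by positivity
        linarith
      obtain ⟨u, huT, hu⟩ := exists_lt_of_lt_csSup hTne h1
      refine hstar u huT _ ?_ hu.le
      rw [htn]; simp only []
      rw [sub_nonneg, div_le_iff₀ (by positivity)]
      nlinarith [htspos]
    have htnlim : Tendsto tn atTop (𝓝 ts) := by
      have h2 : Tendsto (fun n : ℕ => ts / (n + 2)) atTop (𝓝 0) := by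
        apply Tendsto.div_atTop tendsto_const_nhds
        apply tendsto_atTop_add_const_right
        exact tendsto_natCast_atTop_atTop
      have h3 := Tendsto.sub (tendsto_const_nhds : Tendsto (fun _ : ℕ => ts) atTop (𝓝 ts)) h2
      simpa using h3
    have hulim : Tendsto (fun n => p (tn n)) atTop (𝓝 (p ts)) :=
      (hpcont.tendsto ts).comp htnlim
    have hfr : p ts ∈ frontier Sf := by
      constructor
      · apply closure_mono (interior_subset : interior Sf ⊆ Sf)
        exact mem_closure_of_tendsto hulim (Eventually.of_forall (fun n => (htnT n).2.2))
      · exact hmem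
    have hblow := hfes.2.2 (fun n => p (tn n)) (p ts) (fun n => (htnT n).2.2) hfr hulim
    obtain ⟨n, hn⟩ := (hblow.eventually_ge_atTop (B + 1)).exists
    have := hbound (tn n) (htnT n).1 (htnT n).2.1 (htnT n).2.2
    linarith

/-- sublinear convergence: under the descent-lemma assumptions, with `f`
minimized at `xmin`, the dual preconditioned gradient descent iterates satisfy
`k(∇f(x_i)) - k(0) ≤ (L*/i)·(f(x₀) - f(xmin))` for all `i > 0`; in particular
`∇f(x_i) → 0`. -/
theorem stmt14 {d : ℕ} (f k : E d → ℝ) (Sf Sk : Set (E d)) (f' k' : E d → E d)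
    (hfpc : IsProperClosedConvexOn f Sf) (hfes : IsEssentiallySmooth f Sf f')
    (hk : IsLegendre k Sk k')
    (hk0 : (0 : E d) ∈ Sk) (hk0min : ∀ y ∈ Sk, y ≠ 0 → k 0 < k y)
    (L : ℝ) (hL : 0 < L)
    (hincl : ∀ x ∈ interior Sf, f' x ∈ interior Sk)
    (hrel : ∀ x ∈ interior Sf, ∀ y ∈ interior Sf,
      Breg k k' (f' y) (f' x) ≤ L * Breg f f' x y)
    (xmin : E d) (hxmin : xmin ∈ Sf) (hmin : ∀ x ∈ Sf, f xmin ≤ f x)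
    (x : ℕ → E d) (hx0 : x 0 ∈ interior Sf)
    (hiter : ∀ i : ℕ, x (i + 1) = x i - (1 / L) • k' (f' (x i))) :
    (∀ i : ℕ, 0 < i →
      k (f' (x i)) - k 0 ≤ (L / (i : ℝ)) * (f (x 0) - f xmin)) ∧
    Tendsto (fun i => f' (x i)) atTop (𝓝 0) := by
  have hkpc := hk.1
  have hkgrad := hk.2.1.2.1
  have hfconv := hfpc.2.1
  -- iterates stay in the interior
  have hmemi : ∀ i, x i ∈ interior Sf := by
    intro i
    induction i with
    | zero => exact hx0
    | succ i ih =>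
      rw [hiter i]
      exact step_mem hfpc hfes hkpc hk0 hk0min hL hincl hrel ih
  -- one-step inequalities
  have hstep : ∀ i : ℕ, k (f' (x (i+1))) - k 0 ≤ L * (f (x i) - f (x (i+1)))
      ∧ k (f' (x (i+1))) ≤ k (f' (x i)) := by
    intro i
    set z0 := f' (x i) with hz0
    set g := k' z0 with hg
    set zp := f' (x (i+1)) with hzp
    have hxi := hmemi i
    have hxp := hmemi (i+1)
    have hsub : x i - x (i+1) = (1/L) • g := by rw [hiter i]; abel
    have hsub' : x (i+1) - x i = -((1/L) • g) := by rw [hiter i]; abel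
    have h1 := hrel (x i) hxi (x (i+1)) hxp
    rw [Breg, Breg, ← hz0, ← hzp, hsub] at h1
    have e1 : ⟪zp, (1/L) • g⟫ = (1/L) * ⟪g, zp⟫ := by
      rw [real_inner_smul_right, real_inner_comm]
    have e2 : ⟪g, zp - z0⟫ = ⟪g, zp⟫ - ⟪g, z0⟫ := inner_sub_right _ _ _
    rw [e1, e2] at h1
    have heL : L * (f (x i) - f (x (i+1)) - (1/L) * ⟪g, zp⟫)
        = L * (f (x i) - f (x (i+1))) - ⟪g, zp⟫ := by field_simp
    -- gradient inequality of k at z0 against 0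
    have hz0i : z0 ∈ interior Sk := hincl _ hxi
    have hkineq := grad_ineq hkpc.2.1 (hkgrad z0 hz0i) (interior_subset hz0i) hk0
    have e3 : ⟪g, (0:E d) - z0⟫ = -⟪g, z0⟫ := by rw [zero_sub, inner_neg_right]
    rw [e3] at hkineq
    -- gradient inequality of f at x i
    have hfineq := grad_ineq hfconv (hfes.2.1 _ hxi) (interior_subset hxi) (interior_subset hxp)
    rw [← hz0, hsub'] at hfineq
    have e4 : ⟪z0, -((1/L) • g)⟫ = -((1/L) * ⟪g, z0⟫) := by
      rw [inner_neg_right, real_inner_smul_right, real_inner_comm]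
    rw [e4] at hfineq
    have he0 : L * ((1/L) * ⟪g, z0⟫) = ⟪g, z0⟫ := by field_simp
    have hLf : L * (f (x i) - f (x (i+1))) ≤ ⟪g, z0⟫ := by
      have h5 : f (x i) - f (x (i+1)) ≤ (1/L) * ⟪g, z0⟫ := by linarith
      have h6 := mul_le_mul_of_nonneg_left h5 hL.le
      linarith
    constructor
    · linarith [h1, heL, hkineq]
    · linarith [h1, heL, hkineq, hLf]
  -- telescoping
  have htel : ∀ i : ℕ, (i : ℝ) * (k (f' (x i)) - k 0) ≤ L * (f (x 0) - f (x i)) := by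
    intro i
    induction i with
    | zero => simp
    | succ i ih =>
      have hs := hstep i
      have hprod : 0 ≤ (i : ℝ) * (k (f' (x i)) - k (f' (x (i+1)))) :=
        mul_nonneg (Nat.cast_nonneg i) (sub_nonneg.mpr hs.2)
      push_cast
      nlinarith [ih, hs.1, hprod]
  have hrate : ∀ i : ℕ, 0 < i →
      k (f' (x i)) - k 0 ≤ (L / (i : ℝ)) * (f (x 0) - f xmin) := by
    intro i hi
    have hi' : (0:ℝ) < i := by exact_mod_cast hi
    have h1 := htel i
    have h2 : f xmin ≤ f (x i) := hmin _ (interior_subset (hmemi i))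
    have h3 : L * (f (x 0) - f (x i)) ≤ L * (f (x 0) - f xmin) := by nlinarith
    rw [div_mul_eq_mul_div, le_div_iff₀ hi']
    nlinarith
  refine ⟨hrate, ?_⟩
  have hΔ0 : 0 ≤ L * (f (x 0) - f xmin) :=
    mul_nonneg hL.le (sub_nonneg.mpr (hmin _ (interior_subset hx0)))
  rw [NormedAddCommGroup.tendsto_nhds_zero]
  intro ε hε
  obtain ⟨c, hc, hgrow⟩ := growth hkpc hk0 hk0min (s := ε/2) (by positivity)
  set Δ : ℝ := L * (f (x 0) - f xmin) with hΔ
  obtain ⟨N0, hN0⟩ := exists_nat_gt (Δ / c)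
  filter_upwards [eventually_ge_atTop (N0 + 1)] with i hi
  have hipos : 0 < i := lt_of_lt_of_le (Nat.succ_pos N0) hi
  have hi' : (0:ℝ) < i := by exact_mod_cast hipos
  have hri := hrate i hipos
  have hdiv : (L / (i:ℝ)) * (f (x 0) - f xmin) = Δ / i := by
    rw [hΔ, div_mul_eq_mul_div]
  have hN0i : Δ / c < (i : ℝ) := by
    calc Δ / c < (N0 : ℝ) := hN0
      _ ≤ (i : ℝ) := by exact_mod_cast le_of_lt (lt_of_lt_of_le (Nat.lt_succ_self N0) hi)
  have hΔi : Δ / (i:ℝ) < c := by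
    rw [div_lt_iff₀ hi']
    have := (div_lt_iff₀ hc).mp hN0i
    linarith
  -- conclude
  by_contra hcon
  push_neg at hcon
  have hzSk : f' (x i) ∈ Sk := interior_subset (hincl _ (hmemi i))
  have hnz : ε / 2 ≤ ‖f' (x i)‖ := by linarith
  have hgi := hgrow _ hzSk hnz
  have hrat1 : (1:ℝ) ≤ ‖f' (x i)‖ / (ε/2) := by
    rw [le_div_iff₀ (by positivity)]
    linarith
  have : c ≤ c * (‖f' (x i)‖ / (ε/2)) := by
    nlinarith
  linarith [hri, hdiv, hgi, hΔi, this]
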